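/- For every integer n ≥ 3, the quartic polynomial T_u'(δ) = 30δ⁴ − 16nδ³ + (18n² − 12n − 6)δ² + (−12n³ + 12n²)δ − 4n⁴ + 12n³ − 12n² + 4n has exactly one positive real root. Moreover T_u'(0) < 0, so the quintic T_u(δ) = 6δ⁵ − 4nδ⁴ + (6n² − 4n − 2)δ³ + (−6n³ + 6n²)δ² + (−4n⁴ + 12n³ − 12n² + 4n)δ + 2n⁵ − 6n⁴ + 6n³ − 2n² is strictly decreasing on [0, x₀] and strictly increasing on [x₀, ∞), where x₀ is that unique positive root. -/

import Mathlib

theorem quintic_hasDerivAt (a b c d e f x : ℝ) :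
    HasDerivAt (fun δ : ℝ => a*δ^5 + b*δ^4 + c*δ^3 + d*δ^2 + e*δ + f)
      (5*a*x^4 + 4*b*x^3 + 3*c*x^2 + 2*d*x + e) x := by
  have h5 := (hasDerivAt_pow 5 x).const_mul a
  have h4 := (hasDerivAt_pow 4 x).const_mul b
  have h3 := (hasDerivAt_pow 3 x).const_mul c
  have h2 := (hasDerivAt_pow 2 x).const_mul d
  have h1 := (hasDerivAt_id' x).const_mul e
  have h := ((((h5.add h4).add h3).add h2).add h1).add_const f
  refine h.congr_deriv ?_
  push_cast
  ring

/-- For `n ≥ 3`, the quartic `T_u'` has exactly one positive real root `x₀`, satisfies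
`T_u'(0) < 0`, and consequently the quintic `T_u` is strictly decreasing on `[0, x₀]` and
strictly increasing on `[x₀, ∞)`. -/
theorem Tu_monotone (n : ℕ) (hn : 3 ≤ n)
    (Tu' : ℝ → ℝ)
    (hTu' : ∀ δ : ℝ, Tu' δ =
      30 * δ ^ 4 - 16 * (n : ℝ) * δ ^ 3 + (18 * (n : ℝ) ^ 2 - 12 * (n : ℝ) - 6) * δ ^ 2
        + (-12 * (n : ℝ) ^ 3 + 12 * (n : ℝ) ^ 2) * δ
        - 4 * (n : ℝ) ^ 4 + 12 * (n : ℝ) ^ 3 - 12 * (n : ℝ) ^ 2 + 4 * (n : ℝ))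
    (Tu : ℝ → ℝ)
    (hTu : ∀ δ : ℝ, Tu δ =
      6 * δ ^ 5 - 4 * (n : ℝ) * δ ^ 4 + (6 * (n : ℝ) ^ 2 - 4 * (n : ℝ) - 2) * δ ^ 3
        + (-6 * (n : ℝ) ^ 3 + 6 * (n : ℝ) ^ 2) * δ ^ 2
        + (-4 * (n : ℝ) ^ 4 + 12 * (n : ℝ) ^ 3 - 12 * (n : ℝ) ^ 2 + 4 * (n : ℝ)) * δ
        + 2 * (n : ℝ) ^ 5 - 6 * (n : ℝ) ^ 4 + 6 * (n : ℝ) ^ 3 - 2 * (n : ℝ) ^ 2) :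
    (∃! x : ℝ, 0 < x ∧ Tu' x = 0) ∧ Tu' 0 < 0 ∧
    (∀ x₀ : ℝ, 0 < x₀ → Tu' x₀ = 0 →
      StrictAntiOn Tu (Set.Icc 0 x₀) ∧ StrictMonoOn Tu (Set.Ici x₀)) := by
  set c : ℝ := (n : ℝ) with hcdef
  have hc : (3 : ℝ) ≤ c := by rw [hcdef]; exact_mod_cast hn
  -- the quintic and quartic in normalized form
  have e1 : Tu = fun δ : ℝ => 6*δ^5 + (-4*c)*δ^4 + (6*c^2-4*c-2)*δ^3 + (-6*c^3+6*c^2)*δ^2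
      + (-4*c^4+12*c^3-12*c^2+4*c)*δ + (2*c^5-6*c^4+6*c^3-2*c^2) := by
    funext δ; rw [hTu]; ring
  have e2 : Tu' = fun δ : ℝ => 0*δ^5 + 30*δ^4 + (-16*c)*δ^3 + (18*c^2-12*c-6)*δ^2
      + (-12*c^3+12*c^2)*δ + (-4*c^4+12*c^3-12*c^2+4*c) := by
    funext δ; rw [hTu']; ring
  set Q : ℝ → ℝ := fun x => 0*x^5 + 0*x^4 + 120*x^3 + (-48*c)*x^2
      + (36*c^2-24*c-12)*x + (-12*c^3+12*c^2) with hQdef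
  -- derivative facts
  have hD1 : ∀ x : ℝ, HasDerivAt Tu (Tu' x) x := by
    intro x
    rw [e1]
    have h := quintic_hasDerivAt 6 (-4*c) (6*c^2-4*c-2) (-6*c^3+6*c^2)
      (-4*c^4+12*c^3-12*c^2+4*c) (2*c^5-6*c^4+6*c^3-2*c^2) x
    convert h using 1
    rw [hTu']; ring
  have hD2 : ∀ x : ℝ, HasDerivAt Tu' (Q x) x := by
    intro x
    rw [e2]
    have h := quintic_hasDerivAt 0 30 (-16*c) (18*c^2-12*c-6) (-12*c^3+12*c^2)
      (-4*c^4+12*c^3-12*c^2+4*c) x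
    convert h using 1
    rw [hQdef]; ring
  have hD3 : ∀ x : ℝ, HasDerivAt Q (360*x^2 + (-96*c)*x + (36*c^2-24*c-12)) x := by
    intro x
    rw [hQdef]
    have h := quintic_hasDerivAt 0 0 120 (-48*c) (36*c^2-24*c-12) (-12*c^3+12*c^2) x
    convert h using 1
    ring
  have hdTu : deriv Tu = Tu' := funext fun x => (hD1 x).deriv
  have hdTu' : deriv Tu' = Q := funext fun x => (hD2 x).deriv
  have hdQ : ∀ x : ℝ, deriv Q x = 360*x^2 + (-96*c)*x + (36*c^2-24*c-12) :=
    fun x => (hD3 x).deriv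
  have hTu'cont : Continuous Tu' := Differentiable.continuous fun x => (hD2 x).differentiableAt
  have hTucont : Continuous Tu := Differentiable.continuous fun x => (hD1 x).differentiableAt
  -- convexity of Tu'
  have hconv : ConvexOn ℝ Set.univ Tu' := by
    apply convexOn_of_deriv2_nonneg' convex_univ
      (fun x _ => (hD2 x).differentiableAt.differentiableWithinAt)
      (by rw [hdTu']; exact fun x _ => (hD3 x).differentiableAt.differentiableWithinAt)
    intro x _
    have : deriv^[2] Tu' x = deriv (deriv Tu') x := rfl
    rw [this, hdTu', hdQ]
    nlinarith [sq_nonneg (15*x - 2*c), sq_nonneg x, hc]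
  -- value at 0 is negative, value at c is positive
  have h0 : Tu' 0 < 0 := by
    rw [hTu']
    nlinarith [hc, sq_nonneg (c-1)]
  have hposc : 0 < Tu' c := by
    rw [hTu']
    nlinarith [hc]
  -- key consequences of convexity
  have key1 : ∀ x y : ℝ, 0 < x → x < y → Tu' y = 0 → Tu' x < 0 := by
    intro x y hx hxy hy
    have hy0 : 0 < y := hx.trans hxy
    have hb : 0 ≤ x / y := by positivity
    have hb1 : x / y < 1 := (div_lt_one hy0).2 hxy
    have ha : 0 < 1 - x / y := by linarith
    have hsum : (1 - x/y) + x/y = 1 := by ring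
    have := hconv.2 (Set.mem_univ (0:ℝ)) (Set.mem_univ y) (le_of_lt ha) hb hsum
    simp only [smul_eq_mul, mul_zero, zero_add] at this
    have hxeq : x/y * y = x := div_mul_cancel₀ x (ne_of_gt hy0)
    rw [hxeq, hy] at this
    nlinarith [this, mul_neg_of_pos_of_neg ha h0]
  have key2 : ∀ x₀ x : ℝ, 0 < x₀ → x₀ < x → Tu' x₀ = 0 → 0 < Tu' x := by
    intro x₀ x hx0 hxx hroot
    have hx : 0 < x := hx0.trans hxx
    have hb : 0 ≤ x₀ / x := by positivity
    have hb1 : x₀ / x < 1 := (div_lt_one hx).2 hxx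
    have ha : 0 < 1 - x₀/x := by linarith
    have hsum : (1 - x₀/x) + x₀/x = 1 := by ring
    have hcx := hconv.2 (Set.mem_univ (0:ℝ)) (Set.mem_univ x) (le_of_lt ha) hb hsum
    simp only [smul_eq_mul, mul_zero, zero_add] at hcx
    have hxeq : x₀/x * x = x₀ := div_mul_cancel₀ x₀ (ne_of_gt hx)
    rw [hxeq, hroot] at hcx
    -- 0 ≤ (1 - x₀/x) * Tu' 0 + (x₀/x) * Tu' x
    have hbpos : 0 < x₀ / x := by positivity
    nlinarith [mul_neg_of_pos_of_neg ha h0, hcx]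
  constructor
  · -- exists unique positive root
    have h0c : (0:ℝ) ≤ c := by linarith
    have hmem : (0:ℝ) ∈ Set.Icc (Tu' 0) (Tu' c) := ⟨le_of_lt h0, le_of_lt hposc⟩
    obtain ⟨x, hxmem, hxr⟩ := intermediate_value_Icc h0c hTu'cont.continuousOn hmem
    have hx0 : 0 < x := by
      rcases eq_or_lt_of_le hxmem.1 with h | h
      · exfalso; rw [← h] at hxr; exact absurd hxr (ne_of_lt h0)
      · exact h
    refine ⟨x, ⟨hx0, hxr⟩, ?_⟩
    rintro y ⟨hy0, hyr⟩
    by_contra hne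
    rcases lt_or_gt_of_ne hne with h | h
    · exact absurd hyr (ne_of_lt (key1 y x hy0 h hxr))
    · exact absurd hxr (ne_of_lt (key1 x y hx0 h hyr))
  refine ⟨h0, ?_⟩
  intro x₀ hx₀ hroot
  constructor
  · apply strictAntiOn_of_deriv_neg (convex_Icc 0 x₀) hTucont.continuousOn
    intro x hx
    rw [interior_Icc] at hx
    rw [hdTu]
    exact key1 x x₀ hx.1 hx.2 hroot
  · apply strictMonoOn_of_deriv_pos (convex_Ici x₀) hTucont.continuousOn
    intro x hx
    rw [interior_Ici] at hx
    rw [hdTu]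
    exact key2 x₀ x hx₀ hx hroot
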